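/- For all real λ > 0, β > 0, α > 0, t ≥ 0 and every real w > -β, one has e^{-λ t} + ∫₀^∞ e^{-w u} · e^{-λ t - β u} · u^{-1} · Φ(α, 0, λ t (β u)^α) du = exp(-λ t (1 - β^α (β + w)^{-α})). -/

import Mathlib

set_option maxHeartbeats 1000000

open Real MeasureTheory Filter Finset

/-- Wright function `Φ(ρ, δ, z) = Σ_{j≥0} z^j / (j! Γ(ρ j + δ))`. -/
noncomputable def wright (ρ δ z : ℝ) : ℝ :=
  ∑' j : ℕ, z ^ j / ((Nat.factorial j : ℝ) * Real.Gamma (ρ * (j : ℝ) + δ))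

/-- Wright function with second parameter 0:
`Φ(ρ, 0, z) = Σ_{j≥1} z^j / (j! Γ(ρ j))`. -/
noncomputable def wright0 (ρ z : ℝ) : ℝ :=
  ∑' j : ℕ, z ^ (j + 1) /
    ((Nat.factorial (j + 1) : ℝ) * Real.Gamma (ρ * ((j : ℝ) + 1)))

/-- Two-parameter Mittag-Leffler function `E_{ρ,δ}(z) = Σ_{j≥0} z^j / Γ(ρ j + δ)`. -/
noncomputable def ml2 (ρ δ z : ℝ) : ℝ :=
  ∑' j : ℕ, z ^ j / Real.Gamma (ρ * (j : ℝ) + δ)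

/-- Three-parameter generalized Mittag-Leffler function
`E^γ_{ρ,δ}(z) = Σ_{j≥0} (Γ(γ+j)/Γ(γ)) z^j / (j! Γ(ρ j + δ))`. -/
noncomputable def ml3 (γ ρ δ z : ℝ) : ℝ :=
  ∑' j : ℕ, (Real.Gamma (γ + (j : ℝ)) / Real.Gamma γ) * z ^ j /
    ((Nat.factorial j : ℝ) * Real.Gamma (ρ * (j : ℝ) + δ))

/-- Modified Bessel function of the first kind of order 0:
`I₀(z) = Σ_{j≥0} (z/2)^{2j} / (j!)²`. -/
noncomputable def besselI0 (z : ℝ) : ℝ :=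
  ∑' j : ℕ, (z / 2) ^ (2 * j) / ((Nat.factorial j : ℝ) * (Nat.factorial j : ℝ))

lemma aux_integrableOn {a r : ℝ} (ha : 0 < a) (hr : 0 < r) :
    MeasureTheory.IntegrableOn (fun u : ℝ => u ^ (a - 1) * Real.exp (-(r * u)))
      (Set.Ioi (0 : ℝ)) := by
  have h0 := Real.GammaIntegral_convergent ha
  have h1 : MeasureTheory.IntegrableOn
      (fun u : ℝ => Real.exp (-(r * u)) * (r * u) ^ (a - 1)) (Set.Ioi (0 : ℝ)) := by
    have h := integrableOn_Ioi_comp_mul_left_iff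
      (fun x : ℝ => Real.exp (-x) * x ^ (a - 1)) 0 hr
    rw [mul_zero] at h
    exact h.2 h0
  have h2 : MeasureTheory.IntegrableOn
      (fun u : ℝ => r ^ (1 - a) * (Real.exp (-(r * u)) * (r * u) ^ (a - 1)))
      (Set.Ioi (0 : ℝ)) := h1.const_mul (r ^ (1 - a))
  refine h2.congr_fun (fun u hu => ?_) measurableSet_Ioi
  have hu0 : (0:ℝ) < u := hu
  beta_reduce
  rw [Real.mul_rpow hr.le hu0.le,
    show r ^ (1-a) * (Real.exp (-(r*u)) * (r ^ (a-1) * u ^ (a-1)))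
      = (r ^ (1-a) * r ^ (a-1)) * (u ^ (a-1) * Real.exp (-(r*u))) by ring,
    ← Real.rpow_add hr]
  norm_num

lemma aux_exp_shift (y : ℝ) :
    ∑' j : ℕ, y ^ (j + 1) / ((Nat.factorial (j + 1) : ℝ)) = Real.exp y - 1 := by
  have hs : Summable (fun n : ℕ => y ^ n / (Nat.factorial n : ℝ)) :=
    Real.summable_pow_div_factorial y
  have he : Real.exp y = ∑' n : ℕ, y ^ n / (Nat.factorial n : ℝ) := by
    rw [Real.exp_eq_exp_ℝ, NormedSpace.exp_eq_tsum_div]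
  have h0 := Summable.tsum_eq_zero_add hs
  rw [he, h0]
  simp

theorem stmt2 (lam β α : ℝ) (hlam : 0 < lam) (hβ : 0 < β) (hα : 0 < α)
    (t : ℝ) (ht : 0 ≤ t) (w : ℝ) (hw : -β < w) :
    Real.exp (-(lam * t)) +
      (∫ u in Set.Ioi (0 : ℝ),
        Real.exp (-(w * u)) *
          (Real.exp (-(lam * t) - β * u) * u⁻¹ * wright0 α (lam * t * (β * u) ^ α)))
    = Real.exp (-(lam * t) * (1 - β ^ α * (β + w) ^ (-α))) := by
  set x := lam * t with hx
  have hx0 : 0 ≤ x := mul_nonneg hlam.le ht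
  set c := β + w with hc
  have hc0 : 0 < c := by simpa [hc] using by linarith
  set y : ℝ := x * β ^ α * (1 / c) ^ α with hy
  -- coefficient
  set K : ℕ → ℝ := fun j =>
    Real.exp (-x) * x ^ (j + 1) * β ^ (α * ((j : ℝ) + 1)) /
      ((Nat.factorial (j + 1) : ℝ) * Real.Gamma (α * ((j : ℝ) + 1))) with hK
  set F : ℕ → ℝ → ℝ := fun j u =>
    K j * (u ^ (α * ((j : ℝ) + 1) - 1) * Real.exp (-(c * u))) with hF
  have hsj : ∀ j : ℕ, (0:ℝ) < α * ((j : ℝ) + 1) := fun j => by positivity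
  have hGpos : ∀ j : ℕ, 0 < Real.Gamma (α * ((j : ℝ) + 1)) :=
    fun j => Real.Gamma_pos_of_pos (hsj j)
  have hKnn : ∀ j, 0 ≤ K j := by
    intro j
    have := hGpos j
    have : (0:ℝ) < (Nat.factorial (j+1) : ℝ) * Real.Gamma (α * ((j : ℝ) + 1)) := by
      positivity
    positivity
  -- pointwise expansion of the integrand
  have hpt : ∀ u ∈ Set.Ioi (0:ℝ),
      Real.exp (-(w * u)) *
        (Real.exp (-x - β * u) * u⁻¹ * wright0 α (x * (β * u) ^ α))
      = ∑' j : ℕ, F j u := by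
    intro u hu
    have hu0 : (0:ℝ) < u := hu
    have hbu : (0:ℝ) < β * u := by positivity
    have hcalc : Real.exp (-(w * u)) *
        (Real.exp (-x - β * u) * u⁻¹ * wright0 α (x * (β * u) ^ α))
        = (Real.exp (-(w * u)) * (Real.exp (-x - β * u) * u⁻¹)) *
          ∑' j : ℕ, (x * (β * u) ^ α) ^ (j + 1) /
            ((Nat.factorial (j + 1) : ℝ) * Real.Gamma (α * ((j : ℝ) + 1))) := by
      rw [wright0]; ring
    rw [hcalc, ← tsum_mul_left]
    refine tsum_congr fun j => ?_
    have hpow : (x * (β * u) ^ α) ^ (j + 1)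
        = x ^ (j + 1) * (β ^ (α * ((j:ℝ)+1)) * u ^ (α * ((j:ℝ)+1))) := by
      rw [mul_pow]
      congr 1
      rw [← Real.rpow_natCast ((β * u) ^ α) (j + 1), ← Real.rpow_mul hbu.le,
        Real.mul_rpow hβ.le hu0.le]
      push_cast
      ring_nf
    have hexp : Real.exp (-(w * u)) * Real.exp (-x - β * u)
        = Real.exp (-x) * Real.exp (-(c * u)) := by
      rw [← Real.exp_add, ← Real.exp_add]
      congr 1
      simp [hc]; ring
    have hum : u ^ (α * ((j:ℝ)+1) - 1) = u ^ (α * ((j:ℝ)+1)) / u := by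
      rw [Real.rpow_sub hu0, Real.rpow_one]
    simp only [hF, hK]
    rw [hpow, hum]
    rw [show Real.exp (-(w*u)) * (Real.exp (-x - β*u) * u⁻¹)
        = Real.exp (-x) * Real.exp (-(c*u)) * u⁻¹ by rw [← mul_assoc, hexp]]
    have hGne := (hGpos j).ne'
    have hfne : ((Nat.factorial (j+1) : ℝ)) ≠ 0 := by positivity
    field_simp
  -- each F j is integrable with known integral
  have hFint : ∀ j : ℕ, MeasureTheory.IntegrableOn (F j) (Set.Ioi (0:ℝ)) := by
    intro j
    exact (aux_integrableOn (hsj j) hc0).const_mul (K j)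
  have hFval : ∀ j : ℕ, (∫ u in Set.Ioi (0:ℝ), F j u)
      = Real.exp (-x) * (y ^ (j + 1) / (Nat.factorial (j + 1) : ℝ)) := by
    intro j
    rw [hF]
    simp only []
    rw [integral_const_mul, integral_rpow_mul_exp_neg_mul_Ioi (hsj j) hc0]
    have hb : (β ^ α) ^ (j + 1) = β ^ (α * ((j:ℝ)+1)) := by
      rw [← Real.rpow_natCast (β ^ α) (j+1), ← Real.rpow_mul hβ.le]
      push_cast
      ring_nf
    have hcp : ((1/c : ℝ) ^ α) ^ (j + 1) = (1/c : ℝ) ^ (α * ((j:ℝ)+1)) := by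
      rw [← Real.rpow_natCast ((1/c:ℝ) ^ α) (j+1),
        ← Real.rpow_mul (by positivity : (0:ℝ) ≤ 1/c)]
      push_cast
      ring_nf
    have hyp : y ^ (j + 1)
        = x ^ (j + 1) * (β ^ (α * ((j:ℝ)+1)) * (1/c) ^ (α * ((j:ℝ)+1))) := by
      rw [hy, show (x * β ^ α * (1/c) ^ α) ^ (j+1)
          = x ^ (j+1) * ((β ^ α) ^ (j+1) * ((1/c:ℝ) ^ α) ^ (j+1)) by ring, hb, hcp]
    rw [hK, hyp]
    have hGne := (hGpos j).ne'
    have hfne : ((Nat.factorial (j+1) : ℝ)) ≠ 0 := by positivity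
    field_simp
  -- summability of the integrals
  have hys : Summable (fun j : ℕ => Real.exp (-x) * (y ^ (j+1) / (Nat.factorial (j+1) : ℝ))) := by
    apply Summable.mul_left
    exact ((summable_nat_add_iff 1).2 (Real.summable_pow_div_factorial y))
  have hnorm : ∀ j : ℕ, (∫ u in Set.Ioi (0:ℝ), ‖F j u‖)
      = ∫ u in Set.Ioi (0:ℝ), F j u := by
    intro j
    refine setIntegral_congr_fun measurableSet_Ioi (fun u hu => ?_)
    have hu0 : (0:ℝ) < u := hu
    have : 0 ≤ F j u := by
      rw [hF]
      have := hKnn j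
      positivity
    exact Real.norm_of_nonneg this
  -- interchange sum and integral
  have hswap : (∫ u in Set.Ioi (0:ℝ), ∑' j : ℕ, F j u)
      = ∑' j : ℕ, ∫ u in Set.Ioi (0:ℝ), F j u := by
    refine (MeasureTheory.integral_tsum_of_summable_integral_norm hFint ?_).symm
    apply Summable.congr _ (fun j => (hnorm j).symm)
    exact hys.congr fun j => (hFval j).symm
  have hint : (∫ u in Set.Ioi (0 : ℝ),
        Real.exp (-(w * u)) *
          (Real.exp (-x - β * u) * u⁻¹ * wright0 α (x * (β * u) ^ α)))
      = Real.exp (-x) * (Real.exp y - 1) := by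
    rw [setIntegral_congr_fun measurableSet_Ioi hpt, hswap]
    rw [tsum_congr hFval, tsum_mul_left, aux_exp_shift]
  rw [hint]
  have hcinv : c ^ (-α) = (1/c) ^ α := by
    rw [Real.rpow_neg hc0.le, ← Real.inv_rpow hc0.le, one_div]
  rw [show -x * (1 - β ^ α * c ^ (-α)) = -x + y by rw [hcinv, hy]; ring,
    Real.exp_add]
  ring
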